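/- arXiv:2301.07278 — 3 statements merged into one kernel-verified Lean document; each statement's English description precedes it below -/
import Mathlib

section
/- Let a : ℕ → ℕ → ℂ, N ∈ ℕ, m ∈ ℕ, and k : Fin m → ℕ. Then the sum over injective functions n : Fin m → Fin N of ∏_{j} a (n j) (k j) equals ∑_{σ ∈ S_m} sign(σ) · ∏_{c ∈ cycles(σ)} (∑_{n < N} ∏_{j ∈ c} a n (k j)), where cycles(σ) is the decomposition of σ into disjoint cycles (including fixed points as 1-cycles), and for a cycle with support c the inner product is over the indices j in the orbit of that cycle. -/
open Finset

/-- The set of orbits of a permutation of `Fin m` (fixed points give singleton orbits). -/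
def orbits {m : ℕ} (σ : Equiv.Perm (Fin m)) : Finset (Finset (Fin m)) :=
  Finset.univ.image fun j => Finset.univ.filter fun i => σ.SameCycle j i

namespace StmtAux

variable {m : ℕ} (σ : Equiv.Perm (Fin m))

/-- The orbit of `j`. -/
def q (j : Fin m) : Finset (Fin m) := Finset.univ.filter fun i => σ.SameCycle j i

lemma mem_q {i j : Fin m} : i ∈ q σ j ↔ σ.SameCycle j i := by simp [q]

lemma self_mem_q (j : Fin m) : j ∈ q σ j := (mem_q σ).2 (Equiv.Perm.SameCycle.refl σ j)

lemma q_eq_of {i j : Fin m} (h : σ.SameCycle j i) : q σ j = q σ i := by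
  ext x
  simp only [mem_q]
  exact ⟨fun hx => h.symm.trans hx, fun hx => h.trans hx⟩

lemma orbits_eq : orbits σ = Finset.univ.image (q σ) := rfl

lemma q_mem_orbits (j : Fin m) : q σ j ∈ orbits σ := by
  rw [orbits_eq]; exact mem_image_of_mem _ (mem_univ j)

/-- A function invariant under `σ` is constant on cycles. -/
lemma const_of_sameCycle {α : Type*} {n : Fin m → α} (h : ∀ i, n (σ i) = n i)
    {i j : Fin m} (hij : σ.SameCycle i j) : n i = n j := by
  obtain ⟨z, hz⟩ := hij
  subst hz
  induction z using Int.induction_on with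
  | zero => simp
  | succ w ih =>
    rw [show ((w : ℤ) + 1) = 1 + w by ring, zpow_add, zpow_one]
    simp only [Equiv.Perm.mul_apply]
    rw [h]
    exact ih
  | pred w ih =>
    rw [show (-(w : ℤ) - 1) = -1 + -w by ring, zpow_add, zpow_neg_one]
    simp only [Equiv.Perm.mul_apply]
    have := h (σ⁻¹ ((σ ^ (-w : ℤ)) i))
    rw [show σ (σ⁻¹ ((σ ^ (-w : ℤ)) i)) = (σ ^ (-w : ℤ)) i from σ.apply_symm_apply _] at this
    exact ih.trans this

lemma orbit_nonempty {O : Finset (Fin m)} (hO : O ∈ orbits σ) : O.Nonempty := by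
  obtain ⟨j, -, rfl⟩ := Finset.mem_image.1 hO
  exact ⟨j, self_mem_q σ j⟩

lemma q_eq_of_mem {O : Finset (Fin m)} (hO : O ∈ orbits σ) {j : Fin m} (hj : j ∈ O) :
    q σ j = O := by
  obtain ⟨i, -, rfl⟩ := Finset.mem_image.1 hO
  exact (q_eq_of σ ((mem_q σ).1 hj)).symm

lemma filter_q_eq {O : Finset (Fin m)} (hO : O ∈ orbits σ) :
    Finset.univ.filter (fun j => q σ j = O) = O := by
  ext j
  simp only [Finset.mem_filter, Finset.mem_univ, true_and]
  constructor
  · rintro rfl; exact self_mem_q σ j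
  · exact fun hj => q_eq_of_mem σ hO hj

lemma pcongr {β : Type*} {s : Finset (Finset (Fin m))} (p : ∀ O ∈ s, β)
    {O₁ O₂ : Finset (Fin m)} {h₁ : O₁ ∈ s} {h₂ : O₂ ∈ s} (h : O₁ = O₂) :
    p O₁ h₁ = p O₂ h₂ := by subst h; rfl

lemma stepA (a : ℕ → ℕ → ℂ) (N : ℕ) (k : Fin m → ℕ) :
    ∏ O ∈ orbits σ, ∑ x ∈ Finset.range N, ∏ j ∈ O, a x (k j)
    = ∑ n ∈ (Finset.univ : Finset (Fin m → Fin N)).filter (fun n => ∀ i, n (σ i) = n i),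
        ∏ j, a (n j) (k j) := by
  classical
  rw [Finset.prod_sum]
  refine Finset.sum_bij'
    (i := fun p hp => fun j =>
      (⟨p (q σ j) (q_mem_orbits σ j),
        Finset.mem_range.1 (Finset.mem_pi.1 hp (q σ j) (q_mem_orbits σ j))⟩ : Fin N))
    (j := fun n hn => fun O hO => (n (O.min' (orbit_nonempty σ hO)) : ℕ))
    ?_ ?_ ?_ ?_ ?_
  · intro p hp
    simp only [Finset.mem_filter, Finset.mem_univ, true_and]
    intro i
    apply Fin.ext
    exact pcongr p (q_eq_of σ (Equiv.Perm.SameCycle.symm ⟨1, rfl⟩))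
  · intro n hn
    rw [Finset.mem_pi]
    intro O hO
    exact Finset.mem_range.2 (n _).isLt
  · intro p hp
    funext O hO
    exact pcongr p (q_eq_of_mem σ hO (O.min'_mem _))
  · intro n hn
    simp only [Finset.mem_filter, Finset.mem_univ, true_and] at hn
    funext j
    apply Fin.ext
    show ((n ((q σ j).min' _) : Fin N) : ℕ) = (n j : ℕ)
    have hsc : σ.SameCycle j ((q σ j).min' (orbit_nonempty σ (q_mem_orbits σ j))) :=
      (mem_q σ).1 ((q σ j).min'_mem _)
    rw [← const_of_sameCycle σ hn hsc]
  · intro p hp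
    have key : ∀ j : Fin m, a (p (q σ j) (q_mem_orbits σ j)) (k j)
        = ∏ O ∈ (orbits σ).attach, if j ∈ O.1 then a (p O.1 O.2) (k j) else 1 := by
      intro j
      rw [Finset.prod_eq_single (⟨q σ j, q_mem_orbits σ j⟩ : {x // x ∈ orbits σ})]
      · simp [self_mem_q σ j]
      · rintro ⟨O, hO⟩ - hne
        rw [if_neg]
        intro hj
        exact hne (Subtype.ext (q_eq_of_mem σ hO hj).symm)
      · simp
    -- group RHS product over orbits
    rw [← Finset.prod_fiberwise_of_maps_to (g := q σ) (t := orbits σ)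
        (fun j _ => q_mem_orbits σ j) (fun j => a
          ((⟨p (q σ j) (q_mem_orbits σ j),
            Finset.mem_range.1 (Finset.mem_pi.1 hp (q σ j) (q_mem_orbits σ j))⟩ : Fin N) : ℕ)
          (k j))]
    rw [← Finset.prod_attach (orbits σ) (fun O => ∏ j ∈ Finset.univ.filter (fun j => q σ j = O),
        a ((⟨p (q σ j) (q_mem_orbits σ j),
            Finset.mem_range.1 (Finset.mem_pi.1 hp (q σ j) (q_mem_orbits σ j))⟩ : Fin N) : ℕ) (k j))]
    refine Finset.prod_congr rfl fun O _ => ?_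
    rw [filter_q_eq σ O.2]
    refine Finset.prod_congr rfl fun j hj => ?_
    exact (congrArg (fun x => a x (k j)) (pcongr p (q_eq_of_mem σ O.2 hj))).symm

end StmtAux

open StmtAux in
lemma signsum {m N : ℕ} (n : Fin m → Fin N) :
    ∑ σ : Equiv.Perm (Fin m),
      (if ∀ i, n (σ i) = n i then ((Equiv.Perm.sign σ : ℤ) : ℂ) else 0)
    = if Function.Injective n then 1 else 0 := by
  classical
  by_cases hinj : Function.Injective n
  · rw [if_pos hinj]
    have : ∀ σ : Equiv.Perm (Fin m),
        (if ∀ i, n (σ i) = n i then ((Equiv.Perm.sign σ : ℤ) : ℂ) else 0)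
        = if σ = 1 then ((Equiv.Perm.sign σ : ℤ) : ℂ) else 0 := by
      intro σ
      congr 1
      simp only [eq_iff_iff]
      constructor
      · intro h; exact Equiv.ext fun i => hinj (h i)
      · rintro rfl i; rfl
    rw [Finset.sum_congr rfl fun σ _ => this σ, Finset.sum_ite_eq' Finset.univ 1]
    simp
  · rw [if_neg hinj]
    obtain ⟨i, j, hnij, hne⟩ := Function.not_injective_iff.1 hinj
    set τ := Equiv.swap i j with hτdef
    have hτn : ∀ x, n (τ x) = n x := by
      intro x
      rcases eq_or_ne x i with rfl | hxi
      · rw [hτdef, Equiv.swap_apply_left]; exact hnij.symm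
      rcases eq_or_ne x j with rfl | hxj
      · rw [hτdef, Equiv.swap_apply_right]; exact hnij
      · rw [hτdef, Equiv.swap_apply_of_ne_of_ne hxi hxj]
    have hPiff : ∀ σ : Equiv.Perm (Fin m),
        (∀ x, n ((σ * τ) x) = n x) ↔ (∀ x, n (σ x) = n x) := by
      intro σ
      constructor
      · intro h y
        have := h (τ y)
        rw [Equiv.Perm.mul_apply, Equiv.swap_apply_self, hτn y] at this
        exact this
      · intro h x
        rw [Equiv.Perm.mul_apply, h (τ x), hτn x]
    refine Finset.sum_ninvolution (fun σ => σ * τ) ?_ ?_ (fun σ => Finset.mem_univ _) ?_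
    · intro σ
      by_cases hP : ∀ x, n (σ x) = n x
      · rw [if_pos hP, if_pos ((hPiff σ).2 hP), Equiv.Perm.sign_mul,
          Equiv.Perm.sign_swap hne]
        push_cast
        ring
      · rw [if_neg hP, if_neg (fun h => hP ((hPiff σ).1 h)), add_zero]
    · intro σ _ hcontra
      apply hne
      have : τ = 1 := mul_left_cancel (a := σ) (by rw [mul_one]; exact hcontra)
      have := Equiv.congr_fun this i
      rwa [hτdef, Equiv.swap_apply_left, Equiv.Perm.one_apply, eq_comm] at this
    · intro σ
      show σ * τ * τ = σ
      rw [mul_assoc, hτdef, Equiv.swap_mul_self, mul_one]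

theorem stmt4 (a : ℕ → ℕ → ℂ) (N m : ℕ) (k : Fin m → ℕ) :
    ∑ n ∈ (Finset.univ : Finset (Fin m → Fin N)).filter Function.Injective,
      ∏ j, a (n j) (k j)
    = ∑ σ : Equiv.Perm (Fin m), ((Equiv.Perm.sign σ : ℤ) : ℂ) *
        ∏ O ∈ orbits σ, ∑ n ∈ Finset.range N, ∏ j ∈ O, a n (k j) := by
  classical
  symm
  calc ∑ σ : Equiv.Perm (Fin m), ((Equiv.Perm.sign σ : ℤ) : ℂ) *
        ∏ O ∈ orbits σ, ∑ n ∈ Finset.range N, ∏ j ∈ O, a n (k j)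
      = ∑ σ : Equiv.Perm (Fin m), ∑ n : Fin m → Fin N,
          (if ∀ i, n (σ i) = n i then ((Equiv.Perm.sign σ : ℤ) : ℂ) else 0)
            * ∏ j, a (n j) (k j) := by
        refine Finset.sum_congr rfl fun σ _ => ?_
        rw [StmtAux.stepA σ a N k, Finset.mul_sum, Finset.sum_filter]
        refine Finset.sum_congr rfl fun n _ => ?_
        rw [ite_mul, zero_mul]
    _ = ∑ n : Fin m → Fin N, ∑ σ : Equiv.Perm (Fin m),
          (if ∀ i, n (σ i) = n i then ((Equiv.Perm.sign σ : ℤ) : ℂ) else 0)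
            * ∏ j, a (n j) (k j) := Finset.sum_comm
    _ = ∑ n : Fin m → Fin N,
          (if Function.Injective n then (1:ℂ) else 0) * ∏ j, a (n j) (k j) := by
        refine Finset.sum_congr rfl fun n _ => ?_
        rw [← Finset.sum_mul, signsum]
    _ = ∑ n ∈ (Finset.univ : Finset (Fin m → Fin N)).filter Function.Injective,
          ∏ j, a (n j) (k j) := by
        rw [Finset.sum_filter]
        refine Finset.sum_congr rfl fun n _ => ?_
        rw [ite_mul, one_mul, zero_mul]
end

section
/- For a : ℕ → ℕ → ℂ and finite N, the coefficient of λ³ in ∏_{n<N} (1 + ∑_k a n k · λᵏ) equals ∑ a_{n,3} + (∑ a_{n,1})(∑ a_{n,2}) − ∑ a_{n,1}a_{n,2} + (1/6)(∑ a_{n,1})³ − (1/2)(∑ a_{n,1})(∑ a_{n,1}²) + (1/3) ∑ a_{n,1}³, all sums over n < N. -/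
open Finset

private lemma prodP0 (a : ℕ → ℕ → ℂ) (N : ℕ) :
    PowerSeries.coeff (R := ℂ) 0
        (∏ n ∈ Finset.range N, PowerSeries.mk fun k => if k = 0 then 1 else a n k) = 1 := by
  induction N with
  | zero => simp
  | succ N ih =>
    rw [Finset.prod_range_succ, PowerSeries.coeff_mul]
    simp [ih]

private lemma prodP1 (a : ℕ → ℕ → ℂ) (N : ℕ) :
    PowerSeries.coeff (R := ℂ) 1
        (∏ n ∈ Finset.range N, PowerSeries.mk fun k => if k = 0 then 1 else a n k)
    = ∑ n ∈ Finset.range N, a n 1 := by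
  induction N with
  | zero => simp
  | succ N ih =>
    rw [Finset.prod_range_succ, PowerSeries.coeff_mul,
      Finset.Nat.sum_antidiagonal_eq_sum_range_succ_mk]
    simp [Finset.sum_range_succ, ih, prodP0]
    ring

private lemma prodP2 (a : ℕ → ℕ → ℂ) (N : ℕ) :
    PowerSeries.coeff (R := ℂ) 2
        (∏ n ∈ Finset.range N, PowerSeries.mk fun k => if k = 0 then 1 else a n k)
    = ∑ n ∈ Finset.range N, a n 2
      + (1 / 2) * (∑ n ∈ Finset.range N, a n 1) ^ 2
      - (1 / 2) * ∑ n ∈ Finset.range N, (a n 1) ^ 2 := by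
  induction N with
  | zero => simp
  | succ N ih =>
    rw [Finset.prod_range_succ, PowerSeries.coeff_mul,
      Finset.Nat.sum_antidiagonal_eq_sum_range_succ_mk]
    simp [Finset.sum_range_succ, ih, prodP0, prodP1]
    ring

theorem stmt6 (a : ℕ → ℕ → ℂ) (N : ℕ) :
    PowerSeries.coeff (R := ℂ) 3
        (∏ n ∈ Finset.range N, PowerSeries.mk fun k => if k = 0 then 1 else a n k)
    = ∑ n ∈ Finset.range N, a n 3
      + (∑ n ∈ Finset.range N, a n 1) * (∑ n ∈ Finset.range N, a n 2)
      - ∑ n ∈ Finset.range N, a n 1 * a n 2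
      + (1 / 6) * (∑ n ∈ Finset.range N, a n 1) ^ 3
      - (1 / 2) * (∑ n ∈ Finset.range N, a n 1) * (∑ n ∈ Finset.range N, (a n 1) ^ 2)
      + (1 / 3) * ∑ n ∈ Finset.range N, (a n 1) ^ 3 := by
  induction N with
  | zero => simp
  | succ N ih =>
    rw [Finset.prod_range_succ, PowerSeries.coeff_mul,
      Finset.Nat.sum_antidiagonal_eq_sum_range_succ_mk]
    simp [Finset.sum_range_succ, ih, prodP0, prodP1, prodP2]
    ring
end

section
/- For a : ℕ → ℂ, N ∈ ℕ, and m ∈ ℕ, the sum over injective m-tuples n : Fin m → Fin N of ∏_j a(n j) equals ∑_{σ ∈ S_m} sign(σ) ∏_{O ∈ orbits(σ)} P_{|O|}, where P_j := ∑_{n < N} (a n)^j. Equivalently, m! · e_m(a 0, …, a (N−1)) = ∑_{σ ∈ S_m} sign(σ) ∏_{O ∈ orbits(σ)} P_{|O|}, relating elementary symmetric polynomials to power sums via a signed sum over the symmetric group. -/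
open Finset

namespace Stmt19Aux

variable {m N : ℕ}

def orbitOf (σ : Equiv.Perm (Fin m)) (j : Fin m) : Finset (Fin m) :=
  Finset.univ.filter fun i => σ.SameCycle j i

lemma mem_orbitOf {σ : Equiv.Perm (Fin m)} {j i : Fin m} :
    i ∈ orbitOf σ j ↔ σ.SameCycle j i := by simp [orbitOf]

lemma self_mem_orbitOf (σ : Equiv.Perm (Fin m)) (j : Fin m) : j ∈ orbitOf σ j :=
  mem_orbitOf.2 (Equiv.Perm.SameCycle.refl σ j)

lemma orbitOf_eq {σ : Equiv.Perm (Fin m)} {j i : Fin m} (h : σ.SameCycle j i) :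
    orbitOf σ j = orbitOf σ i := by
  ext k
  simp only [mem_orbitOf]
  exact ⟨fun hk => h.symm.trans hk, fun hk => h.trans hk⟩

lemma orbits_eq (σ : Equiv.Perm (Fin m)) : orbits σ = Finset.univ.image (orbitOf σ) := rfl

lemma orbitOf_mem (σ : Equiv.Perm (Fin m)) (j : Fin m) : orbitOf σ j ∈ orbits σ := by
  rw [orbits_eq]; exact mem_image_of_mem _ (mem_univ j)

lemma orbitOf_apply (σ : Equiv.Perm (Fin m)) (j : Fin m) : orbitOf σ (σ j) = orbitOf σ j :=
  (orbitOf_eq ⟨1, by simp⟩).symm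

lemma orbitOf_eq_of_mem {σ : Equiv.Perm (Fin m)} {O : Finset (Fin m)} (hO : O ∈ orbits σ)
    {i : Fin m} (hi : i ∈ O) : orbitOf σ i = O := by
  rw [orbits_eq] at hO
  obtain ⟨k, -, rfl⟩ := mem_image.1 hO
  exact (orbitOf_eq (mem_orbitOf.1 hi)).symm

lemma nonempty_of_mem_orbits {σ : Equiv.Perm (Fin m)} {O : Finset (Fin m)}
    (hO : O ∈ orbits σ) : O.Nonempty := by
  rw [orbits_eq] at hO
  obtain ⟨k, -, rfl⟩ := mem_image.1 hO
  exact ⟨k, self_mem_orbitOf σ k⟩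

lemma univ_eq_biUnion (σ : Equiv.Perm (Fin m)) :
    (Finset.univ : Finset (Fin m)) = (orbits σ).biUnion id := by
  ext i
  simp only [mem_univ, true_iff, mem_biUnion, id]
  exact ⟨orbitOf σ i, orbitOf_mem σ i, self_mem_orbitOf σ i⟩

lemma pairwiseDisjoint_orbits (σ : Equiv.Perm (Fin m)) :
    Set.PairwiseDisjoint (↑(orbits σ)) (id : Finset (Fin m) → Finset (Fin m)) := by
  intro O₁ h₁ O₂ h₂ hne
  refine Finset.disjoint_left.2 fun i hi₁ hi₂ => hne ?_
  rw [← orbitOf_eq_of_mem h₁ hi₁, orbitOf_eq_of_mem h₂ hi₂]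

lemma fix_pow {σ : Equiv.Perm (Fin m)} {n : Fin m → Fin N} (h : ∀ j, n (σ j) = n j) :
    ∀ (k : ℕ) (j : Fin m), n ((σ ^ k) j) = n j := by
  intro k
  induction k with
  | zero => simp
  | succ k ih =>
    intro j
    rw [pow_succ', Equiv.Perm.mul_apply, h, ih]

/-- Lemma A -/
lemma lemA (a : ℕ → ℂ) (σ : Equiv.Perm (Fin m)) :
    ∏ O ∈ orbits σ, ∑ n ∈ Finset.range N, (a n) ^ O.card
      = ∑ n ∈ (Finset.univ : Finset (Fin m → Fin N)).filter
          (fun n => ∀ j, n (σ j) = n j), ∏ j, a (n j) := by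
  have hrep : ∀ O : {x // x ∈ orbits σ}, (O : Finset (Fin m)).Nonempty :=
    fun O => nonempty_of_mem_orbits O.2
  have step1 : ∏ O ∈ orbits σ, ∑ n ∈ Finset.range N, (a n) ^ O.card
      = ∑ g : {x // x ∈ orbits σ} → Fin N,
          ∏ O : {x // x ∈ orbits σ}, (a ((g O) : ℕ)) ^ (O : Finset (Fin m)).card := by
    calc ∏ O ∈ orbits σ, ∑ n ∈ Finset.range N, (a n) ^ O.card
        = ∏ O : {x // x ∈ orbits σ}, ∑ x ∈ (Finset.univ : Finset (Fin N)),
            (a (x : ℕ)) ^ (O : Finset (Fin m)).card := by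
          rw [← Finset.prod_coe_sort (orbits σ) (fun O => ∑ n ∈ Finset.range N, (a n) ^ O.card)]
          refine Finset.prod_congr rfl fun O _ => ?_
          rw [Fin.sum_univ_eq_sum_range (fun i => (a i) ^ (O : Finset (Fin m)).card) N]
      _ = ∑ g ∈ Fintype.piFinset (fun _ : {x // x ∈ orbits σ} => (Finset.univ : Finset (Fin N))),
            ∏ O : {x // x ∈ orbits σ}, (a ((g O) : ℕ)) ^ (O : Finset (Fin m)).card :=
          Finset.prod_univ_sum _ _
      _ = ∑ g : {x // x ∈ orbits σ} → Fin N,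
            ∏ O : {x // x ∈ orbits σ}, (a ((g O) : ℕ)) ^ (O : Finset (Fin m)).card := by
          rw [Fintype.piFinset_univ]
  rw [step1]
  refine Finset.sum_nbij' (fun g j => g ⟨orbitOf σ j, orbitOf_mem σ j⟩)
    (fun n O => n ((hrep O).choose)) ?_ ?_ ?_ ?_ ?_
  · intro g _
    simp only [mem_filter, mem_univ, true_and]
    intro j
    congr 1
    exact Subtype.ext (orbitOf_apply σ j)
  · intro n _; exact mem_univ _
  · intro g _
    funext O
    change g ⟨orbitOf σ ((hrep O).choose), orbitOf_mem σ _⟩ = g O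
    congr 1
    exact Subtype.ext (orbitOf_eq_of_mem O.2 (hrep O).choose_spec)
  · intro n hn
    rw [mem_filter] at hn
    funext j
    change n ((hrep ⟨orbitOf σ j, orbitOf_mem σ j⟩).choose) = n j
    have hmem : (hrep ⟨orbitOf σ j, orbitOf_mem σ j⟩).choose ∈ orbitOf σ j :=
      (hrep ⟨orbitOf σ j, orbitOf_mem σ j⟩).choose_spec
    obtain ⟨k, -, hk⟩ := (mem_orbitOf.1 hmem).exists_pow_eq'
    rw [← hk]
    exact fix_pow hn.2 k j
  · intro g _
    calc ∏ O : {x // x ∈ orbits σ}, (a ((g O) : ℕ)) ^ (O : Finset (Fin m)).card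
        = ∏ O ∈ (orbits σ).attach,
            ∏ j ∈ (O : Finset (Fin m)), a ((g ⟨orbitOf σ j, orbitOf_mem σ j⟩ : Fin N) : ℕ) := by
          rw [← Finset.prod_coe_sort_eq_attach]
          refine Finset.prod_congr rfl fun O _ => ?_
          rw [Finset.prod_congr rfl (fun j hj =>
            show a ((g ⟨orbitOf σ j, orbitOf_mem σ j⟩ : Fin N) : ℕ) = a ((g O : Fin N) : ℕ) by
              rw [show (⟨orbitOf σ j, orbitOf_mem σ j⟩ : {x // x ∈ orbits σ}) = O from
                Subtype.ext (orbitOf_eq_of_mem O.2 hj)]), Finset.prod_const]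
      _ = ∏ O ∈ orbits σ, ∏ j ∈ O, a ((g ⟨orbitOf σ j, orbitOf_mem σ j⟩ : Fin N) : ℕ) :=
          Finset.prod_attach (orbits σ)
            (fun O => ∏ j ∈ O, a ((g ⟨orbitOf σ j, orbitOf_mem σ j⟩ : Fin N) : ℕ))
      _ = ∏ j : Fin m, a ((g ⟨orbitOf σ j, orbitOf_mem σ j⟩ : Fin N) : ℕ) := by
          rw [univ_eq_biUnion σ, Finset.prod_biUnion (pairwiseDisjoint_orbits σ)]
          rfl

/-- Lemma B -/
lemma lemB (n : Fin m → Fin N) :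
    ∑ σ ∈ (Finset.univ : Finset (Equiv.Perm (Fin m))).filter
        (fun σ => ∀ j, n (σ j) = n j), ((Equiv.Perm.sign σ : ℤ) : ℂ)
      = if Function.Injective n then 1 else 0 := by
  split_ifs with h
  · have : (Finset.univ : Finset (Equiv.Perm (Fin m))).filter
        (fun σ => ∀ j, n (σ j) = n j) = {1} := by
      ext σ
      simp only [mem_filter, mem_univ, true_and, mem_singleton]
      constructor
      · intro hσ
        exact Equiv.ext fun j => h (hσ j)
      · rintro rfl j; rfl
    rw [this]
    simp
  · rw [Function.not_injective_iff] at h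
    obtain ⟨i, j, hij, hne⟩ := h
    refine Finset.sum_involution (fun σ _ => Equiv.swap i j * σ) ?_ ?_ ?_ ?_
    · intro σ hσ
      show ((Equiv.Perm.sign σ : ℤ) : ℂ) + ((Equiv.Perm.sign (Equiv.swap i j * σ) : ℤ) : ℂ) = 0
      rw [Equiv.Perm.sign_mul, Equiv.Perm.sign_swap hne]
      push_cast
      ring
    · intro σ hσ _
      intro heq
      have : Equiv.swap i j = 1 := by
        have := congrArg (· * σ⁻¹) heq
        simpa using this
      exact hne (Equiv.swap_eq_one_iff.1 this)
    · intro σ hσ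
      simp only [mem_filter, mem_univ, true_and] at hσ ⊢
      intro k
      rw [Equiv.Perm.mul_apply]
      rcases eq_or_ne (σ k) i with h1 | h1
      · rw [h1, Equiv.swap_apply_left, ← hij, ← h1, hσ]
      · rcases eq_or_ne (σ k) j with h2 | h2
        · rw [h2, Equiv.swap_apply_right, hij, ← h2, hσ]
        · rw [Equiv.swap_apply_of_ne_of_ne h1 h2, hσ]
    · intro σ hσ
      show Equiv.swap i j * (Equiv.swap i j * σ) = σ
      rw [← mul_assoc, Equiv.swap_mul_self, one_mul]

lemma fiber_card {m N : ℕ} (s : Finset (Fin N)) (hs : s.card = m) :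
    (((Finset.univ : Finset (Fin m → Fin N)).filter Function.Injective).filter
      (fun n => Finset.image n Finset.univ = s)).card = Nat.factorial m := by
  classical
  have hperm : (Finset.univ : Finset (Equiv.Perm (Fin m))).card = Nat.factorial m := by
    rw [Finset.card_univ, Fintype.card_perm, Fintype.card_fin]
  rw [← hperm]
  refine (Finset.card_bij'
    (fun (σ : Equiv.Perm (Fin m)) (_ : σ ∈ Finset.univ) =>
      fun j => ((s.orderIsoOfFin hs) (σ j) : Fin N))
    (fun n hn => Equiv.ofBijective
      (fun k => (s.orderIsoOfFin hs).symm ⟨n k, by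
        rw [← (Finset.mem_filter.1 hn).2]
        exact Finset.mem_image_of_mem n (Finset.mem_univ k)⟩)
      (Finite.injective_iff_bijective.1 (fun k₁ k₂ hk => by
        have hinj : Function.Injective n :=
          (Finset.mem_filter.1 (Finset.mem_filter.1 hn).1).2
        have := congrArg (fun x => (((s.orderIsoOfFin hs) x : {x // x ∈ s}) : Fin N)) hk
        simp only [OrderIso.apply_symm_apply] at this
        exact hinj this)))
    ?_ ?_ ?_ ?_).symm
  · intro σ _
    rw [Finset.mem_filter, Finset.mem_filter]
    refine ⟨⟨Finset.mem_univ _, fun j₁ j₂ h => σ.injective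
      ((s.orderIsoOfFin hs).injective (Subtype.coe_injective h))⟩, ?_⟩
    ext x
    simp only [Finset.mem_image, Finset.mem_univ, true_and]
    constructor
    · rintro ⟨j, rfl⟩
      exact ((s.orderIsoOfFin hs) (σ j)).2
    · intro hx
      refine ⟨σ.symm ((s.orderIsoOfFin hs).symm ⟨x, hx⟩), ?_⟩
      rw [Equiv.apply_symm_apply, OrderIso.apply_symm_apply]
  · intro n hn
    exact Finset.mem_univ _
  · intro σ hσ
    ext k
    simp only [Equiv.ofBijective_apply, Subtype.coe_eta, OrderIso.symm_apply_apply]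
  · intro n hn
    funext k
    show (((s.orderIsoOfFin hs) ((s.orderIsoOfFin hs).symm ⟨n k, _⟩) : {x // x ∈ s}) : Fin N) = n k
    rw [OrderIso.apply_symm_apply]

lemma part2aux {m N : ℕ} (a : ℕ → ℂ) :
    ∑ n ∈ (Finset.univ : Finset (Fin m → Fin N)).filter Function.Injective, ∏ j, a (n j)
      = (Nat.factorial m : ℂ) * ∑ s ∈ (Finset.range N).powersetCard m, ∏ i ∈ s, a i := by
  classical
  have hconv : ∑ s ∈ (Finset.range N).powersetCard m, ∏ i ∈ s, a i
      = ∑ s ∈ (Finset.univ : Finset (Fin N)).powersetCard m, ∏ i ∈ s, a (i : ℕ) := by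
    rw [← Nat.Iio_eq_range, ← Fin.map_valEmbedding_univ, Finset.powersetCard_map,
      Finset.sum_map]
    refine Finset.sum_congr rfl fun s _ => ?_
    show ∏ i ∈ Finset.map Fin.valEmbedding s, a i = _
    rw [Finset.prod_map]
    rfl
  rw [hconv]
  rw [← Finset.sum_fiberwise_of_maps_to
    (g := fun n : Fin m → Fin N => Finset.image n Finset.univ)
    (t := (Finset.univ : Finset (Fin N)).powersetCard m)
    (fun n hn => by
      rw [Finset.mem_powersetCard]
      exact ⟨Finset.subset_univ _, by
        rw [Finset.card_image_of_injective _ (Finset.mem_filter.1 hn).2, Finset.card_univ,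
          Fintype.card_fin]⟩) (fun n => ∏ j, a (n j))]
  rw [Finset.mul_sum]
  refine Finset.sum_congr rfl fun s hs => ?_
  have hsc : s.card = m := (Finset.mem_powersetCard.1 hs).2
  have hprod : ∀ n ∈ (((Finset.univ : Finset (Fin m → Fin N)).filter
        Function.Injective).filter (fun n => Finset.image n Finset.univ = s)),
      (∏ j, a ((n j : ℕ))) = ∏ i ∈ s, a (i : ℕ) := by
    intro n hn
    obtain ⟨hn1, hn2⟩ := Finset.mem_filter.1 hn
    have hinj : Function.Injective n := (Finset.mem_filter.1 hn1).2
    rw [← hn2, Finset.prod_image (fun x _ y _ h => hinj h)]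
  rw [Finset.sum_congr rfl hprod, Finset.sum_const, fiber_card s hsc, nsmul_eq_mul]

end Stmt19Aux

open Stmt19Aux in
theorem stmt19 (a : ℕ → ℂ) (N m : ℕ) :
    (∑ n ∈ (Finset.univ : Finset (Fin m → Fin N)).filter Function.Injective,
        ∏ j, a (n j)
      = ∑ σ : Equiv.Perm (Fin m), ((Equiv.Perm.sign σ : ℤ) : ℂ) *
          ∏ O ∈ orbits σ, ∑ n ∈ Finset.range N, (a n) ^ O.card)
    ∧ ((Nat.factorial m : ℂ) *
          ∑ s ∈ (Finset.range N).powersetCard m, ∏ i ∈ s, a i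
        = ∑ σ : Equiv.Perm (Fin m), ((Equiv.Perm.sign σ : ℤ) : ℂ) *
            ∏ O ∈ orbits σ, ∑ n ∈ Finset.range N, (a n) ^ O.card) := by
  have part1 : ∑ n ∈ (Finset.univ : Finset (Fin m → Fin N)).filter Function.Injective,
        ∏ j, a (n j)
      = ∑ σ : Equiv.Perm (Fin m), ((Equiv.Perm.sign σ : ℤ) : ℂ) *
          ∏ O ∈ orbits σ, ∑ n ∈ Finset.range N, (a n) ^ O.card := by
    have : ∀ σ : Equiv.Perm (Fin m), ((Equiv.Perm.sign σ : ℤ) : ℂ) *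
        ∏ O ∈ orbits σ, ∑ n ∈ Finset.range N, (a n) ^ O.card
        = ∑ n : Fin m → Fin N, (if (∀ j, n (σ j) = n j) then
            ((Equiv.Perm.sign σ : ℤ) : ℂ) * ∏ j, a (n j) else 0) := by
      intro σ
      rw [lemA a σ, Finset.mul_sum, Finset.sum_filter]
    rw [Finset.sum_congr rfl fun σ _ => this σ, Finset.sum_comm]
    rw [Finset.sum_filter]
    refine Finset.sum_congr rfl fun n _ => ?_
    have : ∑ σ : Equiv.Perm (Fin m), (if (∀ j, n (σ j) = n j) then
            ((Equiv.Perm.sign σ : ℤ) : ℂ) * ∏ j, a (n j) else 0)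
        = (∑ σ ∈ (Finset.univ : Finset (Equiv.Perm (Fin m))).filter
            (fun σ => ∀ j, n (σ j) = n j), ((Equiv.Perm.sign σ : ℤ) : ℂ)) * ∏ j, a (n j) := by
      rw [Finset.sum_mul, Finset.sum_filter]
    rw [this, lemB]
    split_ifs <;> simp
  refine ⟨part1, ?_⟩
  rw [← part1, part2aux a]
end
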